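/- Let t be a semifinite template with zigzag flange fl(t) = (a₀, …, a_k) and sections t₁, …, t_k, so that t = (a₀, t₁, a₁, …, a_{k−1}, t_k, a_k). If λ ∈ Z(t) ∖ J(t), then bw(λ) = a₀ ⊔ bw(λ^{(1)}) ⊔ a₁ ⊔ ⋯ ⊔ bw(λ^{(k)}) ⊔ a_k for some λ^{(1)} ∈ Z(t₁), …, λ^{(k)} ∈ Z(t_k) (empty outermost flange words being ignored), and the tuple (λ^{(1)}, …, λ^{(k)}) is uniquely determined by λ. -/

import Mathlib

/-!
Common definitions: the zigzag graph on binary words, templates and their coideals,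
zigzag flanges and sections, the functions `F_λ(u)` and `φ_{t,w}`, and harmonic /
semifinite / indecomposable functions on subgraphs of the zigzag graph.
-/

open scoped ENNReal NNReal

namespace Zigzag

/-- Binary words: `true` is `+`, `false` is `−`. -/
abbrev BW := List Bool

/-- `CoveredBy a b`: `b` covers `a` in the subword order, i.e. `|b| = |a| + 1` and `a`
is a subword of `b`; these are the edges of the zigzag graph. -/
def CoveredBy (a b : BW) : Prop := a.Sublist b ∧ b.length = a.length + 1

/-- The set of upper neighbours of `a` lying in `S` is finite. -/
lemma upSet_finite (S : Set BW) (a : BW) : {b | b ∈ S ∧ CoveredBy a b}.Finite :=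
  (List.finite_length_eq Bool (a.length + 1)).subset (fun _ hb => hb.2.2)

/-- The finset of upper neighbours of `a` inside `S`. -/
noncomputable def upFinset (S : Set BW) (a : BW) : Finset BW :=
  (upSet_finite S a).toFinset

/-- A `[0,∞]`-valued function is harmonic on `S ⊆ Z` (with the edges induced from the
zigzag graph) if its value at any vertex of `S` equals the sum of its values at the
upper neighbours lying in `S`. -/
def HarmonicOn (S : Set BW) (φ : BW → ℝ≥0∞) : Prop :=
  ∀ a ∈ S, φ a = ∑ b ∈ upFinset S a, φ b

/-- A template: a nonempty sequence of clusters with alternating signs, each cluster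
being a sign (`true` = `+`, `false` = `−`) with a multiplicity in `{1,2,…} ∪ {∞}`,
containing at least one infinite cluster. -/
structure Template where
  clusters : List (Bool × ℕ∞)
  ne : clusters ≠ []
  pos : ∀ c ∈ clusters, c.2 ≠ 0
  alternating : clusters.Chain' fun c d => c.1 ≠ d.1
  hasInf : ∃ c ∈ clusters, c.2 = ⊤

/-- The binary word obtained from a list of clusters by replacing every infinite
multiplicity by `N` (and keeping the finite multiplicities). -/
def clWord (cs : List (Bool × ℕ∞)) (N : ℕ) : BW :=
  (cs.map fun c => List.replicate (if c.2 = ⊤ then N else c.2.toNat) c.1).flatten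

/-- The coideal generated by a list of clusters: all binary words that are subwords of
some instantiation. -/
def Zcl (cs : List (Bool × ℕ∞)) : Set BW := {a | ∃ N, a.Sublist (clWord cs N)}

/-- The coideal `Z(t)` of the zigzag graph attached to a template `t`. -/
def Zt (t : Template) : Set BW := Zcl t.clusters

/-- The cluster in position `i` of `t` is a separating cluster: a one-symbol finite
cluster which is not outermost and whose two neighbours are infinite clusters
(necessarily of the same sign). -/
def Template.isSep (t : Template) (i : ℕ) : Prop :=
  0 < i ∧ i + 1 < t.clusters.length ∧
  (t.clusters.getD i (true, 1)).2 = 1 ∧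
  (t.clusters.getD (i - 1) (true, 1)).2 = ⊤ ∧
  (t.clusters.getD (i + 1) (true, 1)).2 = ⊤

/-- A template is finite if all its finite clusters are separating; otherwise it is
semifinite. -/
def Template.IsFiniteTemplate (t : Template) : Prop :=
  ∀ i < t.clusters.length, (t.clusters.getD i (true, 1)).2 ≠ ⊤ → t.isSep i

/-- The number of infinite clusters of a template. -/
def Template.numInf (t : Template) : ℕ :=
  (t.clusters.filter fun c => decide (c.2 = ⊤)).length

/-- Position `p` of `t` carries a finite non-separating cluster, i.e. a cluster
contributing to the zigzag flange of `t`. -/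
def IsFlangePos (t : Template) (p : ℕ) : Prop :=
  p < t.clusters.length ∧ (t.clusters.getD p (true, 1)).2 ≠ ⊤ ∧ ¬t.isSep p

/-- Decrease by one the multiplicity of the cluster in position `p`. -/
def decAt (cs : List (Bool × ℕ∞)) (p : ℕ) : List (Bool × ℕ∞) :=
  cs.set p ((cs.getD p (true, 1)).1, (cs.getD p (true, 1)).2 - 1)

/-- The coideal `J(t)`: the union of the coideals `Z(r)` over all `r` obtained from `t`
by removing a single symbol from a cluster corresponding to a block of a binary word
from the zigzag flange of `t` (no merging of clusters is needed to generate `Z(r)`). -/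
def Jt (t : Template) : Set BW :=
  {a | ∃ p, IsFlangePos t p ∧ a ∈ Zcl (decAt t.clusters p)}

/-- The canonical splitting of a template `t` into its zigzag flange
`fl(t) = (a₀, …, a_k)` (given by the lists `A 0, …, A k` of clusters, each consisting
of finite non-separating clusters of `t`) and its sections `t₁, …, t_k` (the maximal
groups of consecutive clusters forming finite templates), so that
`t = (a₀, t₁, a₁, …, a_{k−1}, t_k, a_k)`.  The two `interior` conditions express the
maximality of the decomposition. -/
structure SectionData (t : Template) where
  k : ℕ
  A : Fin (k + 1) → List (Bool × ℕ∞)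
  T : Fin k → Template
  concat : t.clusters
      = A 0 ++ (List.ofFn fun i : Fin k => (T i).clusters ++ A i.succ).flatten
  finA : ∀ j, ∀ c ∈ A j, c.2 ≠ ⊤
  secFin : ∀ i, (T i).IsFiniteTemplate
  interior_ne : ∀ j : Fin (k + 1), (j : ℕ) ≠ 0 → (j : ℕ) ≠ k → A j ≠ []
  interior_not_sep : ∀ j : Fin (k + 1), (j : ℕ) ≠ 0 → (j : ℕ) ≠ k →
      ∀ s : Bool, A j ≠ [(s, 1)]

/-- The binary word corresponding to a list of finite clusters (a flange word). -/
def flangeWord (cs : List (Bool × ℕ∞)) : BW :=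
  (cs.map fun c => List.replicate c.2.toNat c.1).flatten

/-- `a₀ ⊔ ℓ 1 ⊔ a₁ ⊔ … ⊔ ℓ k ⊔ a_k` (empty flange words disappear). -/
def assemble {t : Template} (D : SectionData t) (ℓ : Fin D.k → BW) : BW :=
  flangeWord (D.A 0) ++ (List.ofFn fun i : Fin D.k => ℓ i ++ flangeWord (D.A i.succ)).flatten

/-- `ℓ` is a decomposition of `a` along the sections of `t`:
`bw(a) = a₀ ⊔ bw(ℓ 1) ⊔ a₁ ⊔ … ⊔ bw(ℓ k) ⊔ a_k` with `ℓ i ∈ Z(tᵢ)`. -/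
def decompOf {t : Template} (D : SectionData t) (a : BW) (ℓ : Fin D.k → BW) : Prop :=
  (∀ i, ℓ i ∈ Zt (D.T i)) ∧ a = assemble D ℓ

/-- The signs of the infinite clusters of a list of clusters, in order. -/
def infSigns (cs : List (Bool × ℕ∞)) : List Bool :=
  (cs.filter fun c => decide (c.2 = ⊤)).map Prod.fst

/-- The number of weights consumed by the sections preceding the `i`-th one. -/
def secOffset {t : Template} (D : SectionData t) (i : Fin D.k) : ℕ :=
  ∑ i' ∈ Finset.univ.filter (· < i), (infSigns (D.T i').clusters).length

/-- The part `vᵢ` of the tuple of weights `w` corresponding to the infinite clusters of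
the `i`-th section, as a sequence of (sign, weight) pairs. -/
def vD {t : Template} (D : SectionData t) (w : List ℝ) (i : Fin D.k) : List (Bool × ℝ) :=
  (infSigns (D.T i).clusters).zip (w.drop (secOffset D i))

/-- `F_λ(u)` for a finite sequence `u` of (sign, length) pairs and a zigzag `λ`
(encoded by its binary word `a`, so that `λ` has `a.length + 1` boxes): the sum, over
all decompositions of `λ` into `u.length` consecutive (possibly empty) zigzags
`λ(1), …, λ(m)` with `λ(i)` a row when the `i`-th sign is `+` and a column when it is
`−`, of `u₁ ^ |λ(1)| ⋯ u_m ^ |λ(m)|`.  A decomposition is recorded by the tuple `c` of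
the numbers of boxes of the pieces; the row/column constraint says that the letters of
`a` strictly inside the `i`-th group of boxes all equal the `i`-th sign. -/
noncomputable def Fword (u : List (Bool × ℝ)) (a : BW) : ℝ :=
  ∑ c ∈ (Finset.Nat.antidiagonalTuple u.length (a.length + 1)).filter
      (fun c => ∀ i : Fin u.length,
        (a.drop (∑ i' ∈ Finset.univ.filter (· < i), c i')).take (c i - 1)
          = List.replicate (c i - 1) (u.get i).1),
    ∏ i, (u.get i).2 ^ c i

open Classical in
/-- The function `φ_{t,w}` attached to a semifinite zigzag growth model `(t, w)`:
it equals `+∞` on `J(t)`, and on `Z(t) ∖ J(t)` it equals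
`F_{λ^{(1)}}(v₁) ⋯ F_{λ^{(k)}}(v_k)`, where `(λ^{(1)}, …, λ^{(k)})` is the (unique)
decomposition of `λ` along the sections of `t` (it is `0` off `Z(t)`). -/
noncomputable def phiTW (t : Template) (D : SectionData t) (w : List ℝ) (a : BW) : ℝ≥0∞ :=
  if a ∉ Zt t then 0
  else if a ∈ Jt t then ⊤
  else if h : ∃ ℓ : Fin D.k → BW, decompOf D a ℓ then
    ENNReal.ofReal (∏ i, Fword (vD D w i) (h.choose i))
  else 0

section Kcone

/-- The relation `λ = ∑_{μ : λ ↗ μ} μ` (within `S`) as an element of the free module. -/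
noncomputable def relOf (S : Set BW) (a : BW) : BW →₀ ℝ :=
  Finsupp.single a 1 - ∑ b ∈ upFinset S a, Finsupp.single b 1

/-- The submodule of relations defining `K(S)`. -/
noncomputable def Krel (S : Set BW) : Submodule ℝ (BW →₀ ℝ) :=
  Submodule.span ℝ {f | ∃ a ∈ S, f = relOf S a}

/-- The class of `f` in `K(S) = (⊕_{λ ∈ S} ℝ λ) ⧸ (relations)`. -/
noncomputable def kmk (S : Set BW) (f : BW →₀ ℝ) : (BW →₀ ℝ) ⧸ Krel S :=
  Submodule.Quotient.mk f

/-- Nonnegative formal combinations of vertices of `S`. -/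
def NonnegOn (S : Set BW) (f : BW →₀ ℝ) : Prop :=
  (∀ x, 0 ≤ f x) ∧ ∀ x ∈ f.support, x ∈ S

/-- The cone `K⁺(S)` spanned by the vertices of `S` in `K(S)`. -/
noncomputable def Kpos (S : Set BW) : Set ((BW →₀ ℝ) ⧸ Krel S) :=
  kmk S '' {f | NonnegOn S f}

/-- The order defined by the cone `K⁺(S)`: `x ≤_K y` iff `y − x ∈ K⁺(S)`. -/
def leK (S : Set BW) (x y : (BW →₀ ℝ) ⧸ Krel S) : Prop := y - x ∈ Kpos S

/-- The value of (the canonical extension of) `φ` at a nonnegative combination of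
vertices. -/
noncomputable def phiHat (φ : BW → ℝ≥0∞) (f : BW →₀ ℝ) : ℝ≥0∞ :=
  ∑ x ∈ f.support, ENNReal.ofReal (f x) * φ x

/-- `φ` is finite on `S`. -/
def FiniteOn (S : Set BW) (φ : BW → ℝ≥0∞) : Prop := ∀ a ∈ S, φ a ≠ ⊤

/-- `φ` is a semifinite function on (the graph) `S`: it is not everywhere finite, and
its value at any element `a` of the cone `K⁺` is the supremum of its values at the
elements `b ≤_K a` of the cone where it is finite. -/
def SemifiniteOn (S : Set BW) (φ : BW → ℝ≥0∞) : Prop :=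
  (∃ a ∈ S, φ a = ⊤) ∧
  ∀ f : BW →₀ ℝ, NonnegOn S f →
    phiHat φ f =
      ⨆ g ∈ {g : BW →₀ ℝ |
        NonnegOn S g ∧ leK S (kmk S g) (kmk S f) ∧ phiHat φ g ≠ ⊤}, phiHat φ g

/-- A semifinite harmonic function `φ` on `S` is indecomposable if any finite or
semifinite harmonic function `φ′ ≤ φ` on `S` which does not vanish identically on the
finiteness ideal of `φ` is a constant multiple of `φ` on that ideal. -/
def IndecSemifiniteOn (S : Set BW) (φ : BW → ℝ≥0∞) : Prop :=
  ∀ φ' : BW → ℝ≥0∞, HarmonicOn S φ' →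
    (FiniteOn S φ' ∨ SemifiniteOn S φ') →
    (∀ a ∈ S, φ' a ≤ φ a) →
    (∃ a ∈ S, φ a ≠ ⊤ ∧ φ' a ≠ 0) →
    ∃ c : ℝ≥0, ∀ a ∈ S, φ a ≠ ⊤ → φ' a = (c : ℝ≥0∞) * φ a

end Kcone

end Zigzag


namespace Zigzag

section Aux

abbrev Cl := Bool × ℕ∞
abbrev Block := (List Cl) × (List Cl)

lemma clWord_cons (c : Cl) (cs : List Cl) (N : ℕ) :
    clWord (c :: cs) N = List.replicate (if c.2 = ⊤ then N else c.2.toNat) c.1 ++ clWord cs N := rfl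

lemma clWord_append (cs ds : List Cl) (N : ℕ) :
    clWord (cs ++ ds) N = clWord cs N ++ clWord ds N := by
  simp [clWord]

lemma flangeWord_cons (s : Bool) (m : ℕ∞) (cs : List Cl) :
    flangeWord ((s, m) :: cs) = List.replicate m.toNat s ++ flangeWord cs := rfl

lemma clWord_mono (cs : List Cl) {M N : ℕ} (h : M ≤ N) :
    (clWord cs M).Sublist (clWord cs N) := by
  induction cs with
  | nil => simp [clWord]
  | cons c cs ih =>
    rw [clWord_cons, clWord_cons]
    refine List.Sublist.append ?_ ih
    split
    · exact (List.replicate_sublist_replicate _).2 h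
    · exact List.Sublist.refl _

lemma flangeWord_eq_clWord {cs : List Cl} (h : ∀ c ∈ cs, c.2 ≠ ⊤) (N : ℕ) :
    flangeWord cs = clWord cs N := by
  induction cs with
  | nil => rfl
  | cons c cs ih =>
    obtain ⟨s, m⟩ := c
    rw [flangeWord_cons, clWord_cons, if_neg (h (s, m) (.head _)),
      ih (fun c hc => h c (.tail _ hc))]

lemma Zcl.of_sublist {a b : BW} {cs : List Cl} (h : a.Sublist b) (hb : b ∈ Zcl cs) :
    a ∈ Zcl cs := by
  obtain ⟨N, hN⟩ := hb; exact ⟨N, h.trans hN⟩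

lemma Zcl.app {x y : BW} {cs ds : List Cl} (hx : x ∈ Zcl cs) (hy : y ∈ Zcl ds) :
    x ++ y ∈ Zcl (cs ++ ds) := by
  obtain ⟨M, hM⟩ := hx; obtain ⟨N, hN⟩ := hy
  refine ⟨max M N, ?_⟩
  rw [clWord_append]
  exact (hM.trans (clWord_mono _ (le_max_left _ _))).append
    (hN.trans (clWord_mono _ (le_max_right _ _)))

lemma flangeWord_mem_Zcl {cs : List Cl} (h : ∀ c ∈ cs, c.2 ≠ ⊤) : flangeWord cs ∈ Zcl cs :=
  ⟨0, by rw [flangeWord_eq_clWord h 0]⟩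

lemma nil_mem_Zcl (cs : List Cl) : [] ∈ Zcl cs := ⟨0, List.nil_sublist _⟩

lemma mem_Zcl_nil {a : BW} (h : a ∈ Zcl []) : a = [] := by
  obtain ⟨N, hN⟩ := h
  simpa [clWord] using hN

lemma enat_sub_one_ne_top {m : ℕ∞} (h : m ≠ ⊤) : m - 1 ≠ ⊤ := by
  lift m to ℕ using h
  rw [← Nat.cast_one, ← ENat.coe_sub]
  exact ENat.coe_ne_top _

lemma enat_toNat_sub_one {m : ℕ∞} (h : m ≠ ⊤) : (m - 1).toNat = m.toNat - 1 := by
  lift m to ℕ using h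
  rw [← Nat.cast_one, ← ENat.coe_sub, ENat.toNat_coe, ENat.toNat_coe]

lemma enat_one_le_toNat {m : ℕ∞} (h0 : m ≠ 0) (ht : m ≠ ⊤) : 1 ≤ m.toNat := by
  lift m to ℕ using ht
  rw [ENat.toNat_coe]
  have : m ≠ 0 := by simpa using h0
  omega

def clustersOf (L : List Block) : List Cl := (L.map fun p => p.1 ++ p.2).flatten

lemma clustersOf_nil : clustersOf [] = [] := rfl

lemma clustersOf_cons (p : Block) (L : List Block) :
    clustersOf (p :: L) = p.1 ++ p.2 ++ clustersOf L := by
  simp [clustersOf]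

lemma clustersOf_append (L₁ L₂ : List Block) :
    clustersOf (L₁ ++ L₂) = clustersOf L₁ ++ clustersOf L₂ := by
  simp [clustersOf]

def assembleL (ws : List BW) (L : List Block) : BW :=
  (List.zipWith (fun w p => w ++ flangeWord p.2) ws L).flatten

lemma assembleL_nil' (ws : List BW) : assembleL ws [] = [] := by simp [assembleL]

lemma assembleL_cons (w : BW) (ws : List BW) (p : Block) (L : List Block) :
    assembleL (w :: ws) (p :: L) = w ++ flangeWord p.2 ++ assembleL ws L := by
  simp [assembleL]

lemma assembleL_mem : ∀ {L : List Block} {ws : List BW},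
    (∀ p ∈ L, ∀ c ∈ p.2, c.2 ≠ ⊤) →
    List.Forall₂ (fun w p => w ∈ Zcl p.1) ws L →
    assembleL ws L ∈ Zcl (clustersOf L)
  | [], _, _, h => by
    cases h
    exact ⟨0, by simp [assembleL, clustersOf, clWord]⟩
  | p :: L, _, hfin, .cons hw hL => by
    rw [assembleL_cons, clustersOf_cons]
    exact Zcl.app (Zcl.app hw (flangeWord_mem_Zcl (hfin p (.head _))))
      (assembleL_mem (fun q hq => hfin q (.tail _ hq)) hL)

def BadSplit (L : List Block) (a : BW) : Prop :=
  ∃ (L₁ : List Block) (p : Block) (F₁ : List Cl) (s : Bool) (m : ℕ∞) (F₂ : List Cl)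
    (L₂ : List Block),
    L = L₁ ++ p :: L₂ ∧ p.2 = F₁ ++ (s, m) :: F₂ ∧
    a ∈ Zcl (clustersOf L₁ ++ p.1 ++ F₁ ++ (s, m - 1) :: (F₂ ++ clustersOf L₂))

lemma BadSplit.consBlock {L : List Block} {z : BW} (p : Block) (x : BW)
    (hx : x ∈ Zcl p.1) (hfp : ∀ c ∈ p.2, c.2 ≠ ⊤)
    (h : BadSplit L z) : BadSplit (p :: L) (x ++ flangeWord p.2 ++ z) := by
  obtain ⟨L₁, q, F₁, s, m, F₂, L₂, hL, hq, hz⟩ := h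
  refine ⟨p :: L₁, q, F₁, s, m, F₂, L₂, by rw [hL]; rfl, hq, ?_⟩
  have h2 := Zcl.app (Zcl.app hx (flangeWord_mem_Zcl hfp)) hz
  simp only [clustersOf_cons, List.append_assoc] at h2 ⊢
  exact h2

lemma flange_strict : ∀ {cs : List Cl}, (∀ c ∈ cs, c.2 ≠ ⊤) → ∀ {y : BW},
    y.Sublist (flangeWord cs) → y ≠ flangeWord cs →
    ∃ (F₁ : List Cl) (s : Bool) (m : ℕ∞) (F₂ : List Cl), cs = F₁ ++ (s, m) :: F₂ ∧
      y.Sublist (flangeWord (F₁ ++ (s, m - 1) :: F₂))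
  | [], _, y, hy, hne => absurd (List.sublist_nil.1 hy) hne
  | ⟨s, m⟩ :: cs, hfin, y, hy, hne => by
    rw [flangeWord_cons] at hy
    obtain ⟨y₁, y₂, rfl, h₁, h₂⟩ := List.sublist_append_iff.1 hy
    obtain ⟨n₁, hn₁, rfl⟩ := List.sublist_replicate_iff.1 h₁
    rcases eq_or_lt_of_le hn₁ with heq | hlt
    · by_cases h2 : y₂ = flangeWord cs
      · exact absurd (by rw [heq, h2, flangeWord_cons]) hne
      · obtain ⟨F₁, s', m', F₂, rfl, hsub⟩ :=
          flange_strict (fun c hc => hfin c (.tail _ hc)) h₂ h2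
        refine ⟨(s, m) :: F₁, s', m', F₂, rfl, ?_⟩
        rw [List.cons_append, flangeWord_cons]
        exact ((List.replicate_sublist_replicate _).2 hn₁).append hsub
    · refine ⟨[], s, m, cs, rfl, ?_⟩
      have hm : m ≠ ⊤ := by simpa using hfin (s, m) (.head _)
      rw [List.nil_append, flangeWord_cons]
      rw [enat_toNat_sub_one hm]
      exact ((List.replicate_sublist_replicate _).2 (by omega)).append h₂

lemma exists_decomp_or_bad : ∀ (L : List Block),
    (∀ p ∈ L, ∀ c ∈ p.2, c.2 ≠ ⊤) →
    ∀ {a : BW}, a ∈ Zcl (clustersOf L) →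
    (∃ ws, List.Forall₂ (fun w p => w ∈ Zcl p.1) ws L ∧ a = assembleL ws L) ∨ BadSplit L a
  | [], _, a, ha => by
    left
    exact ⟨[], .nil, by rw [mem_Zcl_nil ha]; rfl⟩
  | p :: L, hfin, a, ha => by
    obtain ⟨N, hN⟩ := ha
    rw [clustersOf_cons, clWord_append, clWord_append] at hN
    obtain ⟨xy, z, rfl, hxy, hz⟩ := List.sublist_append_iff.1 hN
    obtain ⟨x, y, rfl, hx, hy⟩ := List.sublist_append_iff.1 hxy
    have hfinp : ∀ c ∈ p.2, c.2 ≠ ⊤ := hfin p (.head _)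
    rw [← flangeWord_eq_clWord hfinp] at hy
    by_cases hyf : y = flangeWord p.2
    · subst hyf
      rcases exists_decomp_or_bad L (fun q hq => hfin q (.tail _ hq)) ⟨N, hz⟩ with
        ⟨ws, hws, rfl⟩ | hbad
      · exact .inl ⟨x :: ws, .cons ⟨N, hx⟩ hws, by rw [assembleL_cons]⟩
      · exact .inr (BadSplit.consBlock p x ⟨N, hx⟩ hfinp hbad)
    · obtain ⟨F₁, s, m, F₂, hsplit, hsub⟩ := flange_strict hfinp hy hyf
      refine .inr ⟨[], p, F₁, s, m, F₂, L, rfl, hsplit, ?_⟩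
      have hfin' : ∀ c ∈ F₁ ++ (s, m - 1) :: F₂, c.2 ≠ ⊤ := by
        rw [hsplit] at hfinp
        intro c hc
        rcases List.mem_append.1 hc with h | h
        · exact hfinp c (List.mem_append_left _ h)
        · rcases List.mem_cons.1 h with rfl | h
          · exact enat_sub_one_ne_top
              (by simpa using hfinp (s, m) (List.mem_append_right _ (.head _)))
          · exact hfinp c (List.mem_append_right _ (.tail _ h))
      have hyZ : y ∈ Zcl (F₁ ++ (s, m - 1) :: F₂) :=
        Zcl.of_sublist hsub (flangeWord_mem_Zcl hfin')
      have h2 := Zcl.app (Zcl.app (⟨N, hx⟩ : x ∈ Zcl p.1) hyZ)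
        (⟨N, hz⟩ : z ∈ Zcl (clustersOf L))
      simp only [clustersOf_nil, List.nil_append, List.append_assoc, List.cons_append] at h2 ⊢
      exact h2

lemma head_shift {p : Block} {L' : List Block} {w w' Y Y' : BW}
    (hfinp : ∀ c ∈ p.2, c.2 ≠ ⊤) (hposp : ∀ c ∈ p.2, c.2 ≠ 0)
    (hok : p.2 = [] → L' ≠ [] → p.1 = [])
    (hw : w ∈ Zcl p.1) (hw' : w' ∈ Zcl p.1)
    (hY : Y ∈ Zcl (clustersOf L'))
    (hYnil : L' = [] → Y = [] ∧ Y' = [])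
    (heq : w ++ flangeWord p.2 ++ Y = w' ++ flangeWord p.2 ++ Y')
    (hne : w ≠ w') (hle : w.length ≤ w'.length) :
    BadSplit (p :: L') (w ++ flangeWord p.2 ++ Y) := by
  have heq' : w ++ (flangeWord p.2 ++ Y) = w' ++ (flangeWord p.2 ++ Y') := by
    simpa [List.append_assoc] using heq
  obtain ⟨v, hv, hX⟩ : ∃ v, w' = w ++ v ∧
      flangeWord p.2 ++ Y = v ++ (flangeWord p.2 ++ Y') := by
    rcases List.append_eq_append_iff.1 heq' with ⟨v, hv, hX⟩ | ⟨v, hv, hX⟩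
    · exact ⟨v, hv, hX⟩
    · exfalso
      have hlen := congrArg List.length hv
      simp only [List.length_append] at hlen
      have hv0 : v.length = 0 := by omega
      apply hne
      rw [hv, List.length_eq_zero_iff.1 hv0, List.append_nil]
  have hvne : v ≠ [] := by
    intro h
    rw [h, List.append_nil] at hv
    exact hne hv.symm
  have hvpos : 1 ≤ v.length := by
    cases v with
    | nil => exact absurd rfl hvne
    | cons _ _ => simp
  rcases hp2 : p.2 with _ | ⟨⟨s, m⟩, F₂⟩
  · exfalso
    rw [hp2] at hX
    simp only [flangeWord, List.map_nil, List.flatten_nil, List.nil_append] at hX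
    rcases eq_or_ne L' [] with hL | hL
    · obtain ⟨hY0, hY'0⟩ := hYnil hL
      rw [hY0, hY'0, List.append_nil] at hX
      exact hvne (by simpa using hX.symm)
    · have hp1 := hok hp2 hL
      rw [hp1] at hw hw'
      exact hne ((mem_Zcl_nil hw).trans (mem_Zcl_nil hw').symm)
  · have hmem_sm : (s, m) ∈ p.2 := by rw [hp2]; exact .head _
    have hm : m ≠ ⊤ := by simpa using hfinp _ hmem_sm
    have hm0 : m ≠ 0 := by simpa using hposp _ hmem_sm
    have hn1 : 1 ≤ m.toNat := enat_one_le_toNat hm0 hm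
    have hfwlen : 1 ≤ (flangeWord p.2).length := by
      rw [hp2, flangeWord_cons, List.length_append, List.length_replicate]
      omega
    have hdrop : (flangeWord p.2).drop 1 = flangeWord ((s, m - 1) :: F₂) := by
      rw [hp2, flangeWord_cons, flangeWord_cons]
      rw [List.drop_append_of_le_length (by simpa using hn1)]
      congr 1
      rw [enat_toNat_sub_one hm]
      rw [show m.toNat = (m.toNat - 1) + 1 by omega, List.replicate_succ]
      simp
    have hkey : (flangeWord p.2 ++ Y').Sublist (flangeWord ((s, m - 1) :: F₂) ++ Y) := by
      have e1 : flangeWord p.2 ++ Y' = (flangeWord p.2 ++ Y).drop v.length := by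
        rw [hX, List.drop_left]
      have e3 : (flangeWord p.2 ++ Y).drop 1 = flangeWord ((s, m - 1) :: F₂) ++ Y := by
        rw [List.drop_append_of_le_length hfwlen, hdrop]
      have e2 : ((flangeWord p.2 ++ Y).drop v.length).Sublist
          ((flangeWord p.2 ++ Y).drop 1) := by
        rw [show v.length = 1 + (v.length - 1) by omega, ← List.drop_drop]
        exact List.drop_sublist _ _
      rw [e1, ← e3]
      exact e2
    have hfin2 : ∀ c ∈ ((s, m - 1) :: F₂ : List Cl), c.2 ≠ ⊤ := by
      intro c hc
      rcases List.mem_cons.1 hc with rfl | h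
      · exact enat_sub_one_ne_top hm
      · exact hfinp c (by rw [hp2]; exact .tail _ h)
    have hmem2 : flangeWord p.2 ++ Y' ∈ Zcl (((s, m - 1) :: F₂) ++ clustersOf L') :=
      Zcl.of_sublist hkey (Zcl.app (flangeWord_mem_Zcl hfin2) hY)
    refine ⟨[], p, [], s, m, F₂, L', rfl, hp2, ?_⟩
    have hfinal := Zcl.app hw' hmem2
    have hgoal : w ++ flangeWord p.2 ++ Y = w' ++ (flangeWord p.2 ++ Y') := by
      rw [List.append_assoc]; exact heq'
    rw [← hp2, hgoal]
    simp only [clustersOf_nil, List.nil_append, List.append_assoc, List.cons_append] at hfinal ⊢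
    exact hfinal

lemma uniqueL (L : List Block) : ∀ (ws ws' : List BW),
    (∀ p ∈ L, ∀ c ∈ p.2, c.2 ≠ ⊤) → (∀ p ∈ L, ∀ c ∈ p.2, c.2 ≠ 0) →
    (∀ p ∈ L.dropLast, p.2 ≠ [] ∨ p.1 = []) →
    List.Forall₂ (fun w p => w ∈ Zcl p.1) ws L →
    List.Forall₂ (fun w p => w ∈ Zcl p.1) ws' L →
    assembleL ws L = assembleL ws' L → ws ≠ ws' → BadSplit L (assembleL ws L) := by
  induction L with
  | nil =>
    intro ws ws' _ _ _ h1 h2 _ hne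
    cases h1; cases h2; exact absurd rfl hne
  | cons p L ih =>
    intro ws ws' hfin hpos hok h1 h2 heq hne
    obtain ⟨w, u, hw, hu, rfl⟩ := List.forall₂_cons_right_iff.1 h1
    obtain ⟨w', u', hw', hu', rfl⟩ := List.forall₂_cons_right_iff.1 h2
    simp only [assembleL_cons] at heq ⊢
    have hfinp := hfin p (.head _)
    have hposp : ∀ c ∈ p.2, c.2 ≠ 0 := fun c hc => hpos p (.head _) c hc
    have hfinL : ∀ q ∈ L, ∀ c ∈ q.2, c.2 ≠ ⊤ := fun q hq => hfin q (.tail _ hq)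
    have hposL : ∀ q ∈ L, ∀ c ∈ q.2, c.2 ≠ 0 := fun q hq => hpos q (.tail _ hq)
    have hokp : p.2 = [] → L ≠ [] → p.1 = [] := by
      intro h2' hL
      have hpmem : p ∈ (p :: L).dropLast := by
        cases L with
        | nil => exact absurd rfl hL
        | cons r L => rw [List.dropLast_cons₂]; exact .head _
      rcases hok p hpmem with h | h
      · exact absurd h2' h
      · exact h
    have hYnil : L = [] → assembleL u L = [] ∧ assembleL u' L = [] := by
      rintro rfl
      exact ⟨assembleL_nil' u, assembleL_nil' u'⟩
    have hYnil' : L = [] → assembleL u' L = [] ∧ assembleL u L = [] := by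
      intro h
      exact ⟨(hYnil h).2, (hYnil h).1⟩
    have hYm := assembleL_mem hfinL hu
    have hY'm := assembleL_mem hfinL hu'
    by_cases hww : w = w'
    · subst hww
      have hY : assembleL u L = assembleL u' L := by
        rw [List.append_assoc, List.append_assoc] at heq
        exact List.append_cancel_left (List.append_cancel_left heq)
      have hune : u ≠ u' := by
        intro h
        exact hne (by rw [h])
      have hokL : ∀ q ∈ L.dropLast, q.2 ≠ [] ∨ q.1 = [] := by
        intro q hq
        apply hok
        cases L with
        | nil => simp at hq
        | cons r L => rw [List.dropLast_cons₂]; exact .tail _ hq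
      exact BadSplit.consBlock p w hw hfinp (ih u u' hfinL hposL hokL hu hu' hY hune)
    · rcases le_total w.length w'.length with hle | hle
      · exact head_shift hfinp hposp hokp hw hw' hYm hYnil heq hww hle
      · have h := head_shift hfinp hposp hokp hw' hw hY'm hYnil' heq.symm
          (Ne.symm hww) hle
        rw [heq]
        exact h

/-! ### Instantiation with the section data -/

def instL (t : Template) (D : SectionData t) : List Block :=
  ([], D.A 0) :: List.ofFn (fun i : Fin D.k => ((D.T i).clusters, D.A i.succ))

lemma clustersOf_instL (t : Template) (D : SectionData t) :
    clustersOf (instL t D) = t.clusters := by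
  rw [D.concat, instL, clustersOf_cons]
  simp only [clustersOf, List.map_ofFn, List.nil_append]
  rfl

lemma hfin_instL (t : Template) (D : SectionData t) :
    ∀ p ∈ instL t D, ∀ c ∈ p.2, c.2 ≠ ⊤ := by
  intro p hp
  rcases List.mem_cons.1 hp with rfl | hp
  · exact D.finA 0
  · obtain ⟨i, rfl⟩ := List.mem_ofFn.1 hp
    exact D.finA i.succ

lemma mem_clusters_of_flange (t : Template) (D : SectionData t) {p : Block} {c : Cl}
    (hp : p ∈ instL t D) (hc : c ∈ p.2) : c ∈ t.clusters := by
  rw [← clustersOf_instL t D]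
  exact List.mem_flatten.2 ⟨p.1 ++ p.2, List.mem_map.2 ⟨p, hp, rfl⟩,
    List.mem_append_right _ hc⟩

lemma hpos_instL (t : Template) (D : SectionData t) :
    ∀ p ∈ instL t D, ∀ c ∈ p.2, c.2 ≠ 0 :=
  fun p hp c hc => t.pos c (mem_clusters_of_flange t D hp hc)

lemma getD_append_cons {α : Type*} (U : List α) (c : α) (V : List α) (d : α) :
    (U ++ c :: V).getD U.length d = c := by
  induction U with
  | nil => rfl
  | cons u U ih => simpa using ih

lemma hok_instL (t : Template) (D : SectionData t) :
    ∀ p ∈ (instL t D).dropLast, p.2 ≠ [] ∨ p.1 = [] := by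
  intro p hp
  obtain ⟨j, hj, hg⟩ := List.mem_iff_getElem.1 hp
  rw [List.getElem_dropLast] at hg
  have hklen : (instL t D).length = D.k + 1 := by simp [instL]
  have hjlen : j < D.k := by
    rw [List.length_dropLast, hklen] at hj
    omega
  cases j with
  | zero =>
    right
    rw [← hg]
    rfl
  | succ j =>
    left
    simp only [instL, List.getElem_cons_succ, List.getElem_ofFn] at hg
    rw [← hg]
    exact D.interior_ne (Fin.succ ⟨j, by omega⟩) (by simp) (by simp; omega)

lemma set_append_cons (U : List Cl) (c x : Cl) (V : List Cl) :
    (U ++ c :: V).set U.length x = U ++ x :: V := by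
  induction U with
  | nil => rfl
  | cons u U ih => simpa using ih

lemma decAt_append_cons (U : List Cl) (c : Cl) (V : List Cl) :
    decAt (U ++ c :: V) U.length = U ++ (c.1, c.2 - 1) :: V := by
  rw [decAt, getD_append_cons, set_append_cons]

lemma not_isSep_of (t : Template) (U V : List Cl) (s : Bool) (m : ℕ∞)
    (htc : t.clusters = U ++ (s, m) :: V)
    (hd : U = [] ∨ m ≠ 1 ∨ V = [] ∨ (∃ c V', V = c :: V' ∧ c.2 ≠ ⊤) ∨
      (∃ U' c, U = U' ++ [c] ∧ c.2 ≠ ⊤)) :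
    ¬ t.isSep U.length := by
  intro hsep
  obtain ⟨h0, h1, h2, h3, h4⟩ := hsep
  rcases hd with h | h | h | ⟨c, V', rfl, hc⟩ | ⟨U', c, rfl, hc⟩
  · rw [h] at h0
    simp at h0
  · rw [htc, getD_append_cons] at h2
    exact h (by simpa using h2)
  · rw [htc, h] at h1
    simp at h1
  · rw [htc] at h4
    have e : U ++ (s, m) :: c :: V' = (U ++ [(s, m)]) ++ c :: V' := by simp
    have hg := getD_append_cons (U ++ [(s, m)]) c V' (true, 1)
    rw [List.length_append, List.length_singleton] at hg
    rw [e, hg] at h4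
    exact hc h4
  · rw [htc] at h3
    have hl : (U' ++ [c]).length - 1 = U'.length := by simp
    have e : (U' ++ [c]) ++ (s, m) :: V = U' ++ c :: ((s, m) :: V) := by simp
    have hg := getD_append_cons U' c ((s, m) :: V) (true, 1)
    rw [hl, e, hg] at h3
    exact hc h3

lemma badSplit_mem_Jt (t : Template) (D : SectionData t) {a : BW}
    (hbad : BadSplit (instL t D) a) : a ∈ Jt t := by
  obtain ⟨L₁, p, F₁, s, m, F₂, L₂, hL, hp2, hmem⟩ := hbad
  have hpL : p ∈ instL t D := by
    rw [hL]
    exact List.mem_append_right _ (.head _)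
  have hpfl : ∀ c ∈ p.2, c.2 ≠ ⊤ := hfin_instL t D p hpL
  have hm : m ≠ ⊤ := by
    simpa using hpfl (s, m) (by rw [hp2]; exact List.mem_append_right _ (.head _))
  set U : List Cl := clustersOf L₁ ++ p.1 ++ F₁ with hU
  set V : List Cl := F₂ ++ clustersOf L₂ with hV
  have htc : t.clusters = U ++ (s, m) :: V := by
    rw [← clustersOf_instL t D, hL, clustersOf_append, clustersOf_cons, hp2, hU, hV]
    simp [List.append_assoc]
  refine ⟨U.length, ⟨?_, ?_, ?_⟩, ?_⟩
  · have hlen2 : t.clusters.length = U.length + (V.length + 1) := by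
      rw [htc]
      simp [List.length_append]
    omega
  · rw [htc, getD_append_cons]
    simpa using hm
  · apply not_isSep_of t U V s m htc
    rcases F₂ with _ | ⟨c, F₂'⟩
    · rcases L₂ with _ | ⟨q, L₂'⟩
      · right; right; left
        rw [hV]
        simp [clustersOf_nil]
      · rcases List.eq_nil_or_concat F₁ with rfl | ⟨F₁', c, hF₁⟩
        on_goal 2 => rw [List.concat_eq_append] at hF₁; subst hF₁
        · rcases L₁ with _ | ⟨b, L₁'⟩
          · left
            have hphead : p = (([] : List Cl), D.A 0) := by
              rw [instL, List.nil_append] at hL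
              exact (List.cons_eq_cons.1 hL.symm).1
            rw [hU, hphead]
            simp [clustersOf_nil]
          · right; left
            have hL' : List.ofFn (fun i : Fin D.k => ((D.T i).clusters, D.A i.succ)) =
                L₁' ++ p :: (q :: L₂') := by
              rw [instL] at hL
              rw [List.cons_append] at hL
              exact (List.cons_eq_cons.1 hL).2
            have hlen : L₁'.length + 1 < D.k := by
              have := congrArg List.length hL'
              simp only [List.length_ofFn, List.length_append, List.length_cons] at this
              omega
            have hfin1 : L₁'.length < D.k := by omega
            have hg : (List.ofFn fun i : Fin D.k =>
                ((D.T i).clusters, D.A i.succ)).getD L₁'.length (([], []) : Block) = p := by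
              rw [hL']
              exact getD_append_cons _ _ _ _
            rw [List.getD_eq_getElem _ _ (by simpa using hfin1), List.getElem_ofFn] at hg
            have hA : D.A ((⟨L₁'.length, hfin1⟩ : Fin D.k)).succ = p.2 :=
              congrArg Prod.snd hg
            intro hm1
            have hnot := D.interior_not_sep ((⟨L₁'.length, hfin1⟩ : Fin D.k)).succ
              (by simp) (by simp; omega) s
            apply hnot
            rw [hA, hp2, hm1]
            rfl
        · right; right; right; right
          refine ⟨clustersOf L₁ ++ p.1 ++ F₁', c, by rw [hU]; simp, ?_⟩
          apply hpfl
          rw [hp2]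
          exact List.mem_append_left _ (List.mem_append_right _ (.head _))

    · right; right; right; left
      refine ⟨c, F₂' ++ clustersOf L₂, by rw [hV]; simp, ?_⟩
      apply hpfl
      rw [hp2]
      exact List.mem_append_right _ (.tail _ (.head _))
  · have hd : decAt t.clusters U.length = U ++ (s, m - 1) :: V := by
      rw [htc]
      exact decAt_append_cons U (s, m) V
    rw [hd]
    simp only [hU, hV, List.append_assoc, List.cons_append] at hmem ⊢
    exact hmem

lemma zipWith_ofFn {α β γ : Type*} (g : α → β → γ) : ∀ {n : ℕ} (x : Fin n → α) (y : Fin n → β),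
    List.zipWith g (List.ofFn x) (List.ofFn y) = List.ofFn fun i => g (x i) (y i)
  | 0, _, _ => rfl
  | n + 1, x, y => by
    rw [List.ofFn_succ, List.ofFn_succ, List.zipWith_cons_cons, zipWith_ofFn,
      ← List.ofFn_succ (f := fun i => g (x i) (y i))]

lemma assembleL_instL (t : Template) (D : SectionData t) (ℓ : Fin D.k → BW) :
    assembleL ([] :: List.ofFn ℓ) (instL t D) = assemble D ℓ := by
  rw [instL, assembleL_cons, assembleL, zipWith_ofFn]
  simp [assemble]

lemma forall₂_instL (t : Template) (D : SectionData t) (ℓ : Fin D.k → BW)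
    (h : ∀ i, ℓ i ∈ Zt (D.T i)) :
    List.Forall₂ (fun w p => w ∈ Zcl p.1) ([] :: List.ofFn ℓ) (instL t D) := by
  refine .cons (nil_mem_Zcl _) ?_
  rw [List.forall₂_iff_get]
  refine ⟨by simp, ?_⟩
  intro i h₁ h₂
  simp only [List.get_eq_getElem, List.getElem_ofFn]
  exact h _

end Aux

end Zigzag

namespace Zigzag

/-- Lemma 3.10 (1) of the paper.  Let `t` be a semifinite template
with zigzag flange `(a₀, …, a_k)` and sections `t₁, …, t_k`.  Every
`λ ∈ Z(t) ∖ J(t)` admits a unique decomposition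
`bw(λ) = a₀ ⊔ bw(λ^{(1)}) ⊔ a₁ ⊔ ⋯ ⊔ bw(λ^{(k)}) ⊔ a_k` with `λ^{(i)} ∈ Z(tᵢ)`. -/
theorem decomposition_exists_unique (t : Template) (hsf : ¬t.IsFiniteTemplate)
    (D : SectionData t) (a : BW) (ha : a ∈ Zt t) (haJ : a ∉ Jt t) :
    ∃! ℓ : Fin D.k → BW, decompOf D a ℓ := by
  have hfin := hfin_instL t D
  have hpos := hpos_instL t D
  have hok := hok_instL t D
  have haZ : a ∈ Zcl (clustersOf (instL t D)) := by rw [clustersOf_instL]; exact ha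
  rcases exists_decomp_or_bad (instL t D) hfin haZ with ⟨ws, hws, haeq⟩ | hbad
  swap
  · exact absurd (badSplit_mem_Jt t D hbad) haJ
  obtain ⟨w₀, ws₁, h0, h1, rfl⟩ := List.forall₂_cons_right_iff.1 hws
  have hw₀ : w₀ = [] := mem_Zcl_nil h0
  subst hw₀
  have hlen : ws₁.length = D.k := by
    have := h1.length_eq
    simpa using this
  set ℓ : Fin D.k → BW := fun i => ws₁[i.1]'(by rw [hlen]; exact i.isLt) with hℓ
  have hws₁ : ws₁ = List.ofFn ℓ := by
    refine List.ext_getElem (by simp [hlen]) ?_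
    intro n h₁ h₂
    exact (List.getElem_ofFn h₂).symm
  have hmemZ : ∀ i : Fin D.k, ℓ i ∈ Zt (D.T i) := by
    intro i
    have h := (List.forall₂_iff_get.1 h1).2 i.1 (by rw [hlen]; exact i.isLt) (by simp)
    simp [List.get_eq_getElem, List.getElem_ofFn] at h
    exact h
  have hdec : decompOf D a ℓ := by
    refine ⟨hmemZ, ?_⟩
    rw [haeq, hws₁, assembleL_instL]
  refine ⟨ℓ, hdec, ?_⟩
  intro ℓ' hdec'
  by_contra hne
  have h1' := forall₂_instL t D ℓ' hdec'.1
  have h1'' := forall₂_instL t D ℓ hdec.1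
  have hwsne : ([] : BW) :: List.ofFn ℓ' ≠ [] :: List.ofFn ℓ := by
    intro h
    apply hne
    funext i
    have h2 : List.ofFn ℓ' = List.ofFn ℓ := (List.cons_eq_cons.1 h).2
    have h3 := congrArg (fun l => l.getD i.1 ([] : BW)) h2
    simp only [List.getD_eq_getElem _ _ (by simp : (i : ℕ) < (List.ofFn ℓ').length),
      List.getD_eq_getElem _ _ (by simp : (i : ℕ) < (List.ofFn ℓ).length),
      List.getElem_ofFn] at h3
    exact h3
  have heqa : assembleL ([] :: List.ofFn ℓ') (instL t D) =
      assembleL ([] :: List.ofFn ℓ) (instL t D) := by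
    rw [assembleL_instL, assembleL_instL, ← hdec.2, ← hdec'.2]
  have hbad := uniqueL (instL t D) _ _ hfin hpos hok h1' h1'' heqa hwsne
  have hba : a = assembleL ([] :: List.ofFn ℓ') (instL t D) := by
    rw [assembleL_instL]
    exact hdec'.2
  rw [← hba] at hbad
  exact absurd (badSplit_mem_Jt t D hbad) haJ

end Zigzag
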